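/- For each fixed natural number j ≥ 0 and any bounded function ω : ℕ → ℝ (in particular ω(n) = O(1)), the quantity n · φ(j+1, ln n + j·ln ln n + ω(n)), where φ(x, y) = e^{-y} Σ_{i=0}^{x} y^i / i!, is bounded away from 0 as n → ∞. -/

import Mathlib

open Real Filter Asymptotics Finset

/-- For fixed `j` and bounded `ω`, `n · φ(j+1, ln n + j ln ln n + ω(n))` is bounded
away from `0` as `n → ∞`, where `φ(x,y) = e^{-y} Σ_{i≤x} y^i/i!`. -/
theorem multiple_coverage_converse (j : ℕ) (ω : ℕ → ℝ)
    (hω : ∃ C : ℝ, ∀ n : ℕ, |ω n| ≤ C) :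
    ∃ ε : ℝ, 0 < ε ∧ ∀ᶠ n : ℕ in atTop,
      ε ≤ (n : ℝ) * (Real.exp (-(Real.log n + j * Real.log (Real.log n) + ω n)) *
        ∑ i ∈ Finset.range (j + 2),
          (Real.log n + j * Real.log (Real.log n) + ω n) ^ i / (Nat.factorial i : ℝ)) := by
  obtain ⟨C, hC⟩ := hω
  have hC0 : 0 ≤ C := le_trans (abs_nonneg _) (hC 0)
  refine ⟨Real.exp (-C) / (2 ^ j * (Nat.factorial j : ℝ)), by positivity, ?_⟩
  have hlog : Tendsto (fun n : ℕ => Real.log n) atTop atTop :=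
    Real.tendsto_log_atTop.comp tendsto_natCast_atTop_atTop
  filter_upwards [eventually_ge_atTop 1,
    hlog.eventually_ge_atTop (max (2 * C) 1)] with n hn1 hln
  set L := Real.log n with hLdef
  have hL1 : 1 ≤ L := le_trans (le_max_right _ _) hln
  have hL2C : 2 * C ≤ L := le_trans (le_max_left _ _) hln
  have hL0 : 0 < L := lt_of_lt_of_le one_pos hL1
  have hlogL : 0 ≤ Real.log L := Real.log_nonneg hL1
  have hωl : -C ≤ ω n := (abs_le.mp (hC n)).1
  have hωu : ω n ≤ C := (abs_le.mp (hC n)).2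
  set y := L + j * Real.log L + ω n with hydef
  have hy2 : L / 2 ≤ y := by
    have : 0 ≤ (j : ℝ) * Real.log L := by positivity
    nlinarith
  have hy0 : 0 < y := lt_of_lt_of_le (by linarith) hy2
  have hn0 : 0 < (n : ℝ) := by
    have : (1 : ℕ) ≤ n := hn1
    exact_mod_cast Nat.lt_of_lt_of_le Nat.zero_lt_one this
  -- sum lower bound by single term at i = j
  have hsum : y ^ j / (Nat.factorial j : ℝ) ≤
      ∑ i ∈ Finset.range (j + 2), y ^ i / (Nat.factorial i : ℝ) := by
    apply Finset.single_le_sum (f := fun i => y ^ i / (Nat.factorial i : ℝ))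
    · intro i _
      positivity
    · exact Finset.mem_range.mpr (by omega)
  have hexp : (n : ℝ) * Real.exp (-y) = Real.exp (-(j * Real.log L + ω n)) := by
    have hn : (n : ℝ) = Real.exp L := (Real.exp_log hn0).symm
    rw [hn, ← Real.exp_add]
    rw [hydef]; ring_nf
  have hLj : Real.exp (-((j : ℝ) * Real.log L)) * L ^ j = 1 := by
    have : L ^ j = Real.exp ((j : ℝ) * Real.log L) := by
      rw [Real.exp_nat_mul, Real.exp_log hL0]
    rw [this, ← Real.exp_add]
    simp
  have key : Real.exp (-C) / (2 ^ j * (Nat.factorial j : ℝ)) ≤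
      (n : ℝ) * Real.exp (-y) * (y ^ j / (Nat.factorial j : ℝ)) := by
    rw [hexp]
    have hyL : (L / 2) ^ j ≤ y ^ j := pow_le_pow_left₀ (by positivity) hy2 j
    have h1 : Real.exp (-(j * Real.log L + ω n)) * ((L / 2) ^ j / (Nat.factorial j : ℝ)) ≤
        Real.exp (-(j * Real.log L + ω n)) * (y ^ j / (Nat.factorial j : ℝ)) := by
      apply mul_le_mul_of_nonneg_left _ (Real.exp_nonneg _)
      exact div_le_div_of_nonneg_right hyL (by positivity)
    refine le_trans ?_ h1
    have hfac : (0 : ℝ) < (Nat.factorial j : ℝ) := by positivity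
    have hsplit : Real.exp (-(j * Real.log L + ω n)) =
        Real.exp (-((j : ℝ) * Real.log L)) * Real.exp (-(ω n)) := by
      rw [← Real.exp_add]; ring_nf
    rw [hsplit, div_pow, div_div]
    rw [div_le_iff₀ (by positivity)]
    have : Real.exp (-((j : ℝ) * Real.log L)) * Real.exp (-ω n) * (L ^ j / (2 ^ j * (Nat.factorial j : ℝ))) * (2 ^ j * (Nat.factorial j : ℝ))
        = (Real.exp (-((j : ℝ) * Real.log L)) * L ^ j) * Real.exp (-ω n) := by
      field_simp
    rw [this, hLj, one_mul]
    exact Real.exp_le_exp.mpr (by linarith)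
  calc Real.exp (-C) / (2 ^ j * (Nat.factorial j : ℝ))
      ≤ (n : ℝ) * Real.exp (-y) * (y ^ j / (Nat.factorial j : ℝ)) := key
    _ ≤ (n : ℝ) * Real.exp (-y) * ∑ i ∈ Finset.range (j + 2), y ^ i / (Nat.factorial i : ℝ) := by
        apply mul_le_mul_of_nonneg_left hsum (by positivity)
    _ = (n : ℝ) * (Real.exp (-y) * ∑ i ∈ Finset.range (j + 2), y ^ i / (Nat.factorial i : ℝ)) := by
        ring
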